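/- If n is an even positive integer with n ≥ 2, then the product ∏_{i=1}^{n} C(n, i) is not a perfect square. -/

import Mathlib

open Finset Nat

/-- If `n` is an even positive integer with `n ≥ 2`, then `∏_{i=1}^{n} C(n, i)`
is not a perfect square. -/
theorem stmt_3 (n : ℕ) (hn : 2 ≤ n) (heven : Even n) :
    ¬ IsSquare (∏ i ∈ Finset.Icc 1 n, n.choose i) := by
  rintro ⟨c, hc⟩
  obtain ⟨m, rfl⟩ := heven
  have hm : 1 ≤ m := by omega
  obtain ⟨p, pp, hmp, hp2m⟩ := Nat.exists_prime_lt_and_le_two_mul m (by omega)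
  have hpn : p ≤ m + m := by omega
  have hnp : m + m < 2 * p := by omega
  have hnp2 : m + m < p ^ 2 := by
    have h1 : m + 1 ≤ p := hmp
    have h2 : (m + 1) * (m + 1) ≤ p * p := Nat.mul_le_mul h1 h1
    have h3 : (m + 1) * (m + 1) = m * m + m + m + 1 := by ring
    rw [sq]; nlinarith
  set n := m + m with hn_def
  -- valuation of n! at p is 1
  have hlog : Nat.log p n < 2 := Nat.log_lt_of_lt_pow (by omega) hnp2
  have hdivp : n / p = 1 := Nat.div_eq_of_lt_le (by omega) (by omega)
  have hgn : (n !).factorization p = 1 := by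
    have hle : ¬ p ^ 2 ∣ n ! := by
      rw [Nat.Prime.pow_dvd_factorial_iff pp hlog]
      have : ∑ i ∈ Ico 1 2, n / p ^ i = n / p := by simp
      omega
    have h1 : p ∣ n ! := pp.dvd_factorial.2 hpn
    have hpos : 1 ≤ (n !).factorization p :=
      Nat.Prime.factorization_pos_of_dvd pp (factorial_ne_zero n) h1
    have hub : ¬ 2 ≤ (n !).factorization p := by
      intro h2
      exact hle ((Nat.Prime.pow_dvd_iff_le_factorization pp (factorial_ne_zero n)).2 h2)
    omega
  -- valuation of j! at p, for j ≤ n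
  have hg_lt : ∀ j, j < p → (j !).factorization p = 0 := fun j hj =>
    Nat.factorization_factorial_eq_zero_of_lt hj
  have hg_ge : ∀ j, p ≤ j → j ≤ n → (j !).factorization p = 1 := by
    intro j hpj hjn
    have h1 : 1 ≤ (j !).factorization p :=
      Nat.Prime.factorization_pos_of_dvd pp (factorial_ne_zero j) (pp.dvd_factorial.2 hpj)
    have h2 : (j !).factorization p ≤ (n !).factorization p := by
      have hd : j ! ∣ n ! := Nat.factorial_dvd_factorial hjn
      exact (Nat.factorization_le_iff_dvd (factorial_ne_zero j) (factorial_ne_zero n)).2 hd p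
    omega
  -- per-term identity
  have hterm : ∀ i ∈ Icc 1 n, (n.choose i).factorization p
      + ((i !).factorization p + ((n - i)!).factorization p) = 1 := by
    intro i hi
    simp only [mem_Icc] at hi
    have hkey : n.choose i * (i ! * (n - i)!) = n ! := by
      rw [← mul_assoc]; exact Nat.choose_mul_factorial_mul_factorial hi.2
    have hch : n.choose i ≠ 0 := (Nat.choose_pos hi.2).ne'
    have := congrArg (fun f => f p) (congrArg Nat.factorization hkey)
    simpa [Nat.factorization_mul hch (mul_ne_zero (factorial_ne_zero i) (factorial_ne_zero (n-i))),
      Nat.factorization_mul (factorial_ne_zero i) (factorial_ne_zero (n-i)), hgn] using this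
  -- sum identity
  have hsum : (∑ i ∈ Icc 1 n, (n.choose i).factorization p)
      + ((∑ i ∈ Icc 1 n, (i !).factorization p)
        + (∑ i ∈ Icc 1 n, ((n - i)!).factorization p)) = n := by
    have h1 : ∑ i ∈ Icc 1 n, ((n.choose i).factorization p
        + ((i !).factorization p + ((n - i)!).factorization p)) = n := by
      rw [Finset.sum_congr rfl hterm]; simp [Nat.card_Icc]
    rw [Finset.sum_add_distrib, Finset.sum_add_distrib] at h1
    exact h1
  -- compute the two factorial sums
  have hG : ∑ i ∈ Icc 1 n, (i !).factorization p = n + 1 - p := by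
    have : ∑ i ∈ Icc 1 n, (i !).factorization p
        = ∑ i ∈ Icc 1 n, (if p ≤ i then 1 else 0) := by
      refine Finset.sum_congr rfl fun i hi => ?_
      simp only [mem_Icc] at hi
      split
      · exact hg_ge i ‹_› hi.2
      · exact hg_lt i (by omega)
    have hf : (Icc 1 n).filter (fun i => p ≤ i) = Icc p n := by
      ext x; simp only [mem_filter, mem_Icc]; omega
    rw [this, Finset.sum_boole, hf, Nat.card_Icc]
    simp
  have hG' : ∑ i ∈ Icc 1 n, ((n - i)!).factorization p = n - p := by
    have : ∑ i ∈ Icc 1 n, ((n - i)!).factorization p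
        = ∑ i ∈ Icc 1 n, (if i ≤ n - p then 1 else 0) := by
      refine Finset.sum_congr rfl fun i hi => ?_
      simp only [mem_Icc] at hi
      split
      · exact hg_ge (n - i) (by omega) (by omega)
      · exact hg_lt (n - i) (by omega)
    have hf : (Icc 1 n).filter (fun i => i ≤ n - p) = Icc 1 (n - p) := by
      ext x; simp only [mem_filter, mem_Icc]; omega
    rw [this, Finset.sum_boole, hf, Nat.card_Icc]
    simp
  -- valuation of the product
  have hchne : ∀ i ∈ Icc 1 n, n.choose i ≠ 0 := by
    intro i hi
    simp only [mem_Icc] at hi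
    exact (Nat.choose_pos hi.2).ne'
  have hPfact : (∏ i ∈ Icc 1 n, n.choose i).factorization p
      = ∑ i ∈ Icc 1 n, (n.choose i).factorization p := by
    have := congrArg (fun f => f p) (Nat.factorization_prod hchne)
    simpa [Finset.sum_apply'] using this
  have hcne : c ≠ 0 := by
    intro h
    have hPne : (∏ i ∈ Icc 1 n, n.choose i) ≠ 0 := Finset.prod_ne_zero_iff.2 hchne
    rw [hc, h, mul_zero] at hPne
    exact hPne rfl
  have hceven : (∏ i ∈ Icc 1 n, n.choose i).factorization p = 2 * c.factorization p := by
    rw [hc, Nat.factorization_mul hcne hcne]; simp; ring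
  omega
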